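/- Let d = ⟨d_0, …, d_{ℓ−1}⟩ be an extended regular digit string and let j satisfy j + 1 ≤ ℓ − 1 and d_j = 0. Then fix-borrow(d, j) is again a digit string (all digits at most 3) and is extended regular; moreover, its last digit is nonzero. -/

import Mathlib

/-- The value `Σ_{i<ℓ} d_i · 2^i` of a digit string. -/
def digitVal (d : List ℕ) : ℕ := ∑ i ∈ Finset.range d.length, d.getD i 0 * 2 ^ i

/-- A digit string `⟨d_0, …, d_{ℓ−1}⟩` is extended regular if
(i) every `3` is preceded by a `0` or a `1` with only `2`'s in between, and
(ii) every `0` is preceded by a `2` or a `3` with only `1`'s in between. -/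
def ExtReg (d : List ℕ) : Prop :=
  (∀ j < d.length, d.getD j 0 = 3 →
      ∃ k < j, (d.getD k 0 = 0 ∨ d.getD k 0 = 1) ∧
        ∀ m, k < m → m < j → d.getD m 0 = 2) ∧
  (∀ j < d.length, d.getD j 0 = 0 →
      ∃ k < j, (d.getD k 0 = 2 ∨ d.getD k 0 = 3) ∧
        ∀ m, k < m → m < j → d.getD m 0 = 1)

/-- Remove all trailing zero digits of a digit string. -/
def stripTrailingZeros (d : List ℕ) : List ℕ :=
  (d.reverse.dropWhile (· = 0)).reverse

/-- Fix-borrow at position `j` (assuming `d_j = 0` and `j + 1` is a valid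
position): set `d_j := 2`, decrease `d_{j+1}` by one, and remove any trailing
zero digits. -/
def fixBorrow (d : List ℕ) (j : ℕ) : List ℕ :=
  stripTrailingZeros ((d.set j 2).set (j + 1) (d.getD (j + 1) 0 - 1))

lemma getD_set' (l : List ℕ) (i k : ℕ) (a : ℕ) :
    (l.set i a).getD k 0 = if i = k ∧ k < l.length then a else l.getD k 0 := by
  by_cases hk : k < l.length
  · rw [List.getD_eq_getElem _ _ (by simpa using hk), List.getElem_set,
      List.getD_eq_getElem _ _ hk]
    by_cases hik : i = k <;> simp [hik, hk]
  · rw [List.getD_eq_default _ _ (by simpa using not_lt.mp hk),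
      List.getD_eq_default _ _ (not_lt.mp hk)]
    simp [hk]

lemma strip_append (l : List ℕ) :
    stripTrailingZeros l ++ (l.reverse.takeWhile (· = 0)).reverse = l := by
  rw [stripTrailingZeros, ← List.reverse_append, List.takeWhile_append_dropWhile,
    List.reverse_reverse]

lemma strip_getD (l : List ℕ) (i : ℕ) :
    (stripTrailingZeros l).getD i 0 = l.getD i 0 := by
  conv_rhs => rw [← strip_append l]
  by_cases hi : i < (stripTrailingZeros l).length
  · rw [List.getD_append _ _ _ _ hi]
  · rw [List.getD_append_right _ _ _ _ (not_lt.mp hi),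
      List.getD_eq_default _ _ (not_lt.mp hi)]
    set m := (l.reverse.takeWhile (· = 0)).reverse with hm
    have hall : ∀ x ∈ m, x = 0 := by
      intro x hx
      rw [hm, List.mem_reverse] at hx
      simpa using List.mem_takeWhile_imp hx
    by_cases hlt : i - (stripTrailingZeros l).length < m.length
    · exact ((List.getD_eq_getElem m 0 hlt).trans
        (hall _ (List.getElem_mem hlt))).symm
    · rw [List.getD_eq_default _ _ (not_lt.mp hlt)]

lemma strip_length_le (l : List ℕ) : (stripTrailingZeros l).length ≤ l.length := by
  conv_rhs => rw [← strip_append l]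
  simp

lemma strip_mem {l : List ℕ} {x : ℕ} (h : x ∈ stripTrailingZeros l) : x ∈ l := by
  rw [← strip_append l]; exact List.mem_append_left _ h

lemma strip_getLastD_ne {l : List ℕ} (h : ∃ x ∈ l, x ≠ 0) :
    (stripTrailingZeros l).getLastD 0 ≠ 0 := by
  have hne : l.reverse.dropWhile (· = 0) ≠ [] := by
    intro hnil
    rw [List.dropWhile_eq_nil_iff] at hnil
    obtain ⟨x, hx, hx0⟩ := h
    exact hx0 (by simpa using hnil x (List.mem_reverse.mpr hx))
  rw [stripTrailingZeros, List.getLastD_eq_getLast?, List.getLast?_reverse,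
    List.head?_eq_head hne]
  have := List.head_dropWhile_not (· = 0) (l := l.reverse) hne
  simpa using this

/-- A fix-borrow keeps the representation an extended regular digit string
whose last digit is nonzero. -/
theorem stmt_10 (d : List ℕ) (j : ℕ) (hj : j + 1 < d.length)
    (hdig : ∀ x ∈ d, x ≤ 3) (hreg : ExtReg d) (h0 : d.getD j 0 = 0) :
    (∀ x ∈ fixBorrow d j, x ≤ 3) ∧ ExtReg (fixBorrow d j) ∧
      (fixBorrow d j).getLastD 0 ≠ 0 := by
  set d' : List ℕ := (d.set j 2).set (j + 1) (d.getD (j + 1) 0 - 1) with hd'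
  have hjlt : j < d.length := lt_trans (Nat.lt_succ_self j) hj
  have hlen : d'.length = d.length := by simp [hd']
  have hget : ∀ k, d'.getD k 0 =
      if k = j then 2 else if k = j + 1 then d.getD (j + 1) 0 - 1 else d.getD k 0 := by
    intro k
    rw [hd', getD_set', getD_set']
    simp only [List.length_set]
    split_ifs <;> omega
  have hd3 : d.getD (j+1) 0 ≤ 3 := by
    rw [List.getD_eq_getElem _ _ hj]; exact hdig _ (List.getElem_mem hj)
  have hreg' : (∀ p < d.length, d'.getD p 0 = 3 →
      ∃ k < p, (d'.getD k 0 = 0 ∨ d'.getD k 0 = 1) ∧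
        ∀ m, k < m → m < p → d'.getD m 0 = 2) ∧
      (∀ p < d.length, d'.getD p 0 = 0 →
      ∃ k < p, (d'.getD k 0 = 2 ∨ d'.getD k 0 = 3) ∧
        ∀ m, k < m → m < p → d'.getD m 0 = 1) := by
    constructor
    · intro p hp h3
      rw [hget] at h3
      by_cases hpj : p = j
      · rw [if_pos hpj] at h3; omega
      by_cases hpj1 : p = j + 1
      · rw [if_neg hpj, if_pos hpj1] at h3; omega
      rw [if_neg hpj, if_neg hpj1] at h3
      obtain ⟨k, hk, hk01, hbet⟩ := hreg.1 p hp h3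
      by_cases hplt : p < j
      · exact ⟨k, hk, by rw [hget]; split_ifs <;> omega,
          fun m hm1 hm2 => by
            rw [hget]; split_ifs <;> first | omega | exact hbet m hm1 hm2⟩
      have hpgt1 : j + 1 < p := by omega
      rcases lt_trichotomy k j with hklt | hkj | hkgt
      · have := hbet j hklt (by omega); omega
      · subst hkj
        have h2 : d.getD (k+1) 0 = 2 := hbet (k+1) (by omega) (by omega)
        refine ⟨k+1, by omega, by rw [hget]; split_ifs <;> omega,
          fun m hm1 hm2 => ?_⟩
        rw [hget]; split_ifs <;> first | omega | exact hbet m (by omega) hm2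
      · by_cases hkj1 : k = j + 1
        · subst hkj1
          exact ⟨j+1, hk, by rw [hget]; split_ifs <;> omega,
            fun m hm1 hm2 => by
              rw [hget]; split_ifs <;> first | omega | exact hbet m hm1 hm2⟩
        · exact ⟨k, hk, by rw [hget]; split_ifs <;> omega,
            fun m hm1 hm2 => by
              rw [hget]; split_ifs <;> first | omega | exact hbet m hm1 hm2⟩
    · intro p hp hz
      rw [hget] at hz
      by_cases hpj : p = j
      · rw [if_pos hpj] at hz; omega
      by_cases hpj1 : p = j + 1
      · refine ⟨j, by omega, by rw [hget]; split_ifs <;> omega,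
          fun m hm1 hm2 => by omega⟩
      rw [if_neg hpj, if_neg hpj1] at hz
      obtain ⟨k, hk, hk23, hbet⟩ := hreg.2 p hp hz
      by_cases hplt : p < j
      · exact ⟨k, hk, by rw [hget]; split_ifs <;> omega,
          fun m hm1 hm2 => by
            rw [hget]; split_ifs <;> first | omega | exact hbet m hm1 hm2⟩
      have hpgt1 : j + 1 < p := by omega
      rcases lt_trichotomy k j with hklt | hkj | hkgt
      · have := hbet j hklt (by omega); omega
      · subst hkj; omega
      · by_cases hkj1 : k = j + 1
        · subst hkj1
          rcases (by omega : d.getD (j+1) 0 = 2 ∨ d.getD (j+1) 0 = 3) with h2 | h3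
          · refine ⟨j, by omega, by rw [hget]; split_ifs <;> omega,
              fun m hm1 hm2 => ?_⟩
            rw [hget]; split_ifs <;> first | omega | exact hbet m (by omega) hm2
          · exact ⟨j+1, hk, by rw [hget]; split_ifs <;> omega,
              fun m hm1 hm2 => by
                rw [hget]; split_ifs <;> first | omega | exact hbet m hm1 hm2⟩
        · exact ⟨k, hk, by rw [hget]; split_ifs <;> omega,
            fun m hm1 hm2 => by
              rw [hget]; split_ifs <;> first | omega | exact hbet m hm1 hm2⟩
  have hfb : fixBorrow d j = stripTrailingZeros d' := rfl
  refine ⟨?_, ?_, ?_⟩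
  · intro x hx
    rcases List.mem_or_eq_of_mem_set (strip_mem (hfb ▸ hx)) with h | h
    · rcases List.mem_or_eq_of_mem_set h with h' | h'
      · exact hdig _ h'
      · omega
    · omega
  · constructor
    · intro p hp h3
      rw [hfb] at h3 ⊢; rw [strip_getD] at h3; simp only [strip_getD]
      have hple : p < d.length :=
        lt_of_lt_of_le (hfb ▸ hp) (le_trans (strip_length_le _) (le_of_eq hlen))
      obtain ⟨k, hk, hk01, hbet⟩ := hreg'.1 p hple h3
      exact ⟨k, hk, hk01,
        hbet⟩
    · intro p hp hz
      rw [hfb] at hz ⊢; rw [strip_getD] at hz; simp only [strip_getD]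
      have hple : p < d.length :=
        lt_of_lt_of_le (hfb ▸ hp) (le_trans (strip_length_le _) (le_of_eq hlen))
      obtain ⟨k, hk, hk23, hbet⟩ := hreg'.2 p hple hz
      exact ⟨k, hk, hk23,
        hbet⟩
  · rw [hfb]
    apply strip_getLastD_ne
    refine ⟨2, ?_, by norm_num⟩
    have h2 : d'.getD j 0 = 2 := by rw [hget]; simp
    rw [List.getD_eq_getElem _ _ (by omega)] at h2
    exact h2 ▸ List.getElem_mem _
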